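/- For an irrational x in (0,1), the condition lim_{j→∞} (log q_{j+1}(x))/q_j(x) = 0 holds if and only if lim_{j→∞} β_{j-1}(x)·a_j(x)·log a_j(x) = 0. -/

import Mathlib

open Filter Topology Finset

/-- Gauss map `G(y) = 1/y - ⌊1/y⌋`. -/
noncomputable def gauss (x : ℝ) : ℝ := Int.fract x⁻¹

/-- `pa x j` is the `j`-th continued fraction partial quotient `a_j(x) = ⌊1/G^{j-1}(x)⌋` (for `j ≥ 1`). -/
noncomputable def pa (x : ℝ) (j : ℕ) : ℤ := ⌊(gauss^[j-1] x)⁻¹⌋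

/-- `beta x j = β_j(x) = ∏_{i=0}^{j} G^i(x)`. -/
noncomputable def beta (x : ℝ) (j : ℕ) : ℝ := ∏ i ∈ Finset.range (j+1), gauss^[i] x

/-- Convergent denominators: `q_0 = 1`, `q_1 = a_1`, `q_j = a_j q_{j-1} + q_{j-2}`. -/
noncomputable def q (x : ℝ) : ℕ → ℤ
  | 0 => 1
  | 1 => pa x 1
  | (n+2) => pa x (n+2) * q x (n+1) + q x n

variable {x : ℝ}

lemma iter_mem (hx : x ∈ Set.Ioo (0:ℝ) 1) (hirr : Irrational x) (i : ℕ) :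
    gauss^[i] x ∈ Set.Ioo (0:ℝ) 1 ∧ Irrational (gauss^[i] x) := by
  induction i with
  | zero => exact ⟨hx, hirr⟩
  | succ n ih =>
    obtain ⟨⟨h0, h1⟩, hir⟩ := ih
    rw [Function.iterate_succ_apply']
    have hinv : Irrational (gauss^[n] x)⁻¹ := hir.inv
    have hg : Irrational (gauss (gauss^[n] x)) := by
      unfold gauss
      rw [Int.fract]
      exact hinv.sub_intCast _
    refine ⟨⟨?_, ?_⟩, hg⟩
    · rcases lt_or_eq_of_le (Int.fract_nonneg (gauss^[n] x)⁻¹) with h | h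
      · exact h
      · exact absurd h.symm (by simpa [gauss] using hg.ne_int 0)
    · exact Int.fract_lt_one _

lemma pa_one_le (hx : x ∈ Set.Ioo (0:ℝ) 1) (hirr : Irrational x) (j : ℕ) :
    1 ≤ pa x (j+1) := by
  have h := (iter_mem hx hirr j).1
  have : (1:ℝ) < (gauss^[j] x)⁻¹ := (one_lt_inv₀ h.1).mpr h.2
  have : (1:ℤ) ≤ ⌊(gauss^[j] x)⁻¹⌋ := by
    exact_mod_cast Int.le_floor.mpr (by exact_mod_cast this.le)
  simpa [pa] using this

lemma q_basic (hx : x ∈ Set.Ioo (0:ℝ) 1) (hirr : Irrational x) (n : ℕ) :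
    1 ≤ q x n ∧ q x n ≤ q x (n+1) := by
  induction n with
  | zero =>
    refine ⟨le_refl _, ?_⟩
    show (1:ℤ) ≤ q x 1
    simpa [q] using pa_one_le hx hirr 0
  | succ n ih =>
    obtain ⟨h1, h2⟩ := ih
    have hq1 : 1 ≤ q x (n+1) := h1.trans h2
    refine ⟨hq1, ?_⟩
    show q x (n+1) ≤ pa x (n+2) * q x (n+1) + q x n
    have hpa : 1 ≤ pa x (n+2) := pa_one_le hx hirr (n+1)
    nlinarith

lemma q_pos (hx : x ∈ Set.Ioo (0:ℝ) 1) (hirr : Irrational x) (n : ℕ) : 1 ≤ q x n :=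
  (q_basic hx hirr n).1

lemma q_mono (hx : x ∈ Set.Ioo (0:ℝ) 1) (hirr : Irrational x) (n : ℕ) :
    q x n ≤ q x (n+1) := (q_basic hx hirr n).2

lemma q_ge_n (hx : x ∈ Set.Ioo (0:ℝ) 1) (hirr : Irrational x) (n : ℕ) :
    (n : ℤ) ≤ q x n := by
  induction n using Nat.twoStepInduction with
  | zero => simp [q]
  | one => simpa [q] using pa_one_le hx hirr 0
  | more n ih1 ih2 =>
    show ((n:ℤ)+2) ≤ pa x (n+2) * q x (n+1) + q x n
    have hpa : 1 ≤ pa x (n+2) := pa_one_le hx hirr (n+1)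
    have h1 : 1 ≤ q x (n+1) := q_pos hx hirr (n+1)
    have h2 : 1 ≤ q x n := q_pos hx hirr n
    have := ih2
    push_cast at this ⊢
    nlinarith

lemma q_lb (hx : x ∈ Set.Ioo (0:ℝ) 1) (hirr : Irrational x) (j : ℕ) :
    pa x (j+1) * q x j ≤ q x (j+1) := by
  cases j with
  | zero => simp [q]
  | succ n =>
    show pa x (n+2) * q x (n+1) ≤ pa x (n+2) * q x (n+1) + q x n
    have := q_pos hx hirr n
    omega

lemma q_ub (hx : x ∈ Set.Ioo (0:ℝ) 1) (hirr : Irrational x) (j : ℕ) :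
    q x (j+1) ≤ (pa x (j+1) + 1) * q x j := by
  cases j with
  | zero => simp [q]
  | succ n =>
    show pa x (n+2) * q x (n+1) + q x n ≤ (pa x (n+2) + 1) * q x (n+1)
    have := q_mono hx hirr n
    nlinarith

lemma beta_succ (j : ℕ) : beta x (j+1) = beta x j * gauss^[j+1] x := by
  simp [beta, Finset.prod_range_succ]

lemma beta_pos (hx : x ∈ Set.Ioo (0:ℝ) 1) (hirr : Irrational x) (j : ℕ) :
    0 < beta x j := by
  unfold beta
  exact Finset.prod_pos (fun i _ => (iter_mem hx hirr i).1.1)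

lemma gauss_eq (hx : x ∈ Set.Ioo (0:ℝ) 1) (hirr : Irrational x) (j : ℕ) :
    gauss^[j+1] x = (gauss^[j] x)⁻¹ - (pa x (j+1) : ℝ) := by
  rw [Function.iterate_succ_apply']
  show Int.fract (gauss^[j] x)⁻¹ = _
  rw [Int.fract]
  simp [pa]

lemma beta_rec (hx : x ∈ Set.Ioo (0:ℝ) 1) (hirr : Irrational x) (j : ℕ) :
    beta x (j+2) = beta x j - (pa x (j+2) : ℝ) * beta x (j+1) := by
  have hne : gauss^[j+1] x ≠ 0 := ne_of_gt (iter_mem hx hirr (j+1)).1.1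
  have h1 : beta x (j+1) * (gauss^[j+1] x)⁻¹ = beta x j := by
    rw [beta_succ j, mul_assoc, mul_inv_cancel₀ hne, mul_one]
  rw [beta_succ (j+1), gauss_eq hx hirr (j+1), mul_sub, h1]
  ring

lemma key_id (hx : x ∈ Set.Ioo (0:ℝ) 1) (hirr : Irrational x) (j : ℕ) :
    (q x (j+1) : ℝ) * beta x j + (q x j : ℝ) * beta x (j+1) = 1 := by
  induction j with
  | zero =>
    have hx0 : x ≠ 0 := ne_of_gt hx.1
    have hb0 : beta x 0 = x := by simp [beta]
    have hb1 : beta x 1 = x * (x⁻¹ - (pa x 1 : ℝ)) := by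
      rw [beta_succ 0, gauss_eq hx hirr 0]; simp [beta]
    have hq1 : (q x 1 : ℝ) = (pa x 1 : ℝ) := by norm_cast
    rw [hb0, hb1, hq1]
    show (pa x 1 : ℝ) * x + (q x 0 : ℝ) * (x * (x⁻¹ - (pa x 1:ℝ))) = 1
    have : (q x 0 : ℝ) = 1 := by norm_cast
    rw [this]
    field_simp
    ring
  | succ n ih =>
    have hq2 : (q x (n+2) : ℝ) = (pa x (n+2) : ℝ) * (q x (n+1):ℝ) + (q x n : ℝ) := by
      norm_cast
    rw [beta_rec hx hirr n, hq2]
    ring_nf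
    ring_nf at ih
    linarith

lemma beta_ub (hx : x ∈ Set.Ioo (0:ℝ) 1) (hirr : Irrational x) (j : ℕ) :
    (q x (j+1) : ℝ) * beta x j < 1 := by
  have h := key_id hx hirr j
  have h1 : 0 < (q x j : ℝ) := by exact_mod_cast q_pos hx hirr j
  have h2 : 0 < beta x (j+1) := beta_pos hx hirr (j+1)
  nlinarith

lemma beta_lb (hx : x ∈ Set.Ioo (0:ℝ) 1) (hirr : Irrational x) (j : ℕ) :
    1 < 2 * ((q x (j+1) : ℝ) * beta x j) := by
  have h := key_id hx hirr j
  have h1 : (q x j : ℝ) ≤ (q x (j+1) : ℝ) := by exact_mod_cast q_mono hx hirr j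
  have h1' : 0 < (q x j : ℝ) := by exact_mod_cast q_pos hx hirr j
  have hb : 0 < beta x j := beta_pos hx hirr j
  have hlt : beta x (j+1) < beta x j := by
    rw [beta_succ j]
    have := (iter_mem hx hirr (j+1)).1
    nlinarith [this.1, this.2]
  nlinarith

/-- `log q_{j+1}/q_j → 0` iff `β_{j-1} a_j log a_j → 0`. -/
theorem stmt4 (x : ℝ) (hx : x ∈ Set.Ioo (0:ℝ) 1) (hirr : Irrational x) :
    Tendsto (fun j : ℕ => Real.log (q x (j+1)) / (q x j : ℝ)) atTop (nhds 0) ↔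
      Tendsto (fun j : ℕ => beta x j * (pa x (j+1) : ℝ) * Real.log (pa x (j+1))) atTop (nhds 0) := by
  have hQ1 : ∀ j, (1:ℝ) ≤ (q x j : ℝ) := fun j => by exact_mod_cast q_pos hx hirr j
  have hQp : ∀ j, (0:ℝ) < (q x j : ℝ) := fun j => lt_of_lt_of_le one_pos (hQ1 j)
  have ha1 : ∀ j, (1:ℝ) ≤ (pa x (j+1) : ℝ) := fun j => by exact_mod_cast pa_one_le hx hirr j
  have hap : ∀ j, (0:ℝ) < (pa x (j+1) : ℝ) := fun j => lt_of_lt_of_le one_pos (ha1 j)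
  have hloga : ∀ j, 0 ≤ Real.log (pa x (j+1) : ℝ) := fun j => Real.log_nonneg (ha1 j)
  have hlb : ∀ j, (pa x (j+1) : ℝ) * (q x j : ℝ) ≤ (q x (j+1) : ℝ) := fun j => by
    exact_mod_cast q_lb hx hirr j
  have hub : ∀ j, (q x (j+1) : ℝ) ≤ ((pa x (j+1) : ℝ) + 1) * (q x j : ℝ) := fun j => by
    exact_mod_cast q_ub hx hirr j
  have hbp : ∀ j, 0 < beta x j := beta_pos hx hirr
  have hbu : ∀ j, (q x (j+1) : ℝ) * beta x j < 1 := beta_ub hx hirr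
  have hbl : ∀ j, 1 < 2 * ((q x (j+1) : ℝ) * beta x j) := beta_lb hx hirr
  set Q : ℕ → ℝ := fun j => (q x j : ℝ) with hQdef
  set L : ℕ → ℝ := fun j => Real.log (pa x (j+1) : ℝ) / Q j with hLdef
  -- limits
  have hQtop : Tendsto Q atTop atTop := by
    apply tendsto_atTop_mono (fun n => ?_) tendsto_natCast_atTop_atTop
    show (n:ℝ) ≤ (q x n : ℝ)
    exact_mod_cast q_ge_n hx hirr n
  have hM : Tendsto (fun j => Real.log (Q j) / Q j) atTop (nhds 0) :=
    (Real.isLittleO_log_id_atTop.tendsto_div_nhds_zero).comp hQtop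
  have hinv : Tendsto (fun j => Real.log 2 / Q j) atTop (nhds 0) :=
    tendsto_const_nhds.div_atTop hQtop
  -- pointwise inequalities
  have hL0 : ∀ j, 0 ≤ L j := fun j => div_nonneg (hloga j) (hQp j).le
  have hLA : ∀ j, L j ≤ Real.log (q x (j+1)) / (q x j : ℝ) := by
    intro j
    have hle : Real.log (pa x (j+1) : ℝ) ≤ Real.log (q x (j+1) : ℝ) := by
      apply Real.log_le_log (hap j)
      nlinarith [hlb j, ha1 j, hQ1 j]
    show Real.log (pa x (j+1) : ℝ) / (q x j : ℝ) ≤ _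
    gcongr
    exact (hQp j).le
  have hA0 : ∀ j, 0 ≤ Real.log (q x (j+1)) / (q x j : ℝ) := fun j =>
    div_nonneg (Real.log_nonneg (hQ1 (j+1))) (hQp j).le
  have hBL : ∀ j, beta x j * (pa x (j+1) : ℝ) * Real.log (pa x (j+1)) ≤ L j := by
    intro j
    rw [hLdef]
    show _ ≤ Real.log (pa x (j+1) : ℝ) / (q x j : ℝ)
    rw [le_div_iff₀ (hQp j)]
    nlinarith [hloga j, hbp j, hQp j, ha1 j, hbu j,
      mul_le_mul_of_nonneg_left (hlb j) (hbp j).le]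
  have hB0 : ∀ j, 0 ≤ beta x j * (pa x (j+1) : ℝ) * Real.log (pa x (j+1)) := fun j =>
    mul_nonneg (mul_nonneg (hbp j).le (hap j).le) (hloga j)
  have hLB : ∀ j, L j ≤ 4 * (beta x j * (pa x (j+1) : ℝ) * Real.log (pa x (j+1))) := by
    intro j
    rw [hLdef]
    show Real.log (pa x (j+1) : ℝ) / (q x j : ℝ) ≤ _
    rw [div_le_iff₀ (hQp j)]
    have h2 : (q x (j+1) : ℝ) ≤ 2 * (pa x (j+1) : ℝ) * (q x j : ℝ) := by
      nlinarith [hub j, ha1 j, hQp j]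
    nlinarith [hloga j, hbp j, hQp j, ha1 j, hbl j,
      mul_le_mul_of_nonneg_left h2 (hbp j).le]
  have hAub : ∀ j, Real.log (q x (j+1)) / (q x j : ℝ) ≤
      Real.log 2 / Q j + L j + Real.log (Q j) / Q j := by
    intro j
    have hane : (pa x (j+1) : ℝ) ≠ 0 := ne_of_gt (hap j)
    have h1 : Real.log (q x (j+1) : ℝ) ≤
        Real.log 2 + Real.log (pa x (j+1) : ℝ) + Real.log (q x j : ℝ) := by
      have e1 : (q x (j+1) : ℝ) ≤ 2 * (pa x (j+1) : ℝ) * (q x j : ℝ) := by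
        nlinarith [hub j, ha1 j, hQp j]
      calc Real.log (q x (j+1) : ℝ) ≤ Real.log (2 * (pa x (j+1) : ℝ) * (q x j : ℝ)) :=
            Real.log_le_log (hQp (j+1)) e1
      _ = Real.log 2 + Real.log (pa x (j+1) : ℝ) + Real.log (q x j : ℝ) := by
          rw [Real.log_mul (mul_ne_zero two_ne_zero hane) (ne_of_gt (hQp j)),
             Real.log_mul two_ne_zero hane]
    show _ ≤ Real.log 2 / (q x j : ℝ) + Real.log (pa x (j+1) : ℝ) / (q x j : ℝ)
        + Real.log (q x j : ℝ) / (q x j : ℝ)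
    rw [← add_div, ← add_div, div_le_div_iff₀ (hQp j) (hQp j)]
    nlinarith [hQp j, h1]
  constructor
  · intro hA
    have hL : Tendsto L atTop (nhds 0) := squeeze_zero hL0 hLA hA
    exact squeeze_zero hB0 hBL hL
  · intro hB
    have hL : Tendsto L atTop (nhds 0) := by
      apply squeeze_zero hL0 hLB
      simpa using hB.const_mul (4:ℝ)
    have hsum : Tendsto (fun j => Real.log 2 / Q j + L j + Real.log (Q j) / Q j)
        atTop (nhds 0) := by
      simpa using (hinv.add hL).add hM
    exact squeeze_zero hA0 hAub hsum
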